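/- Let Ω ⊆ ℝ² be open and let λ : ℝ² → ℂ be differentiable on Ω with Im λ > 0 on Ω. Set α := |λ|² (= λ·conj λ) and β := −2·Re λ, so that λ² + βλ + α = 0. Then the following are equivalent: (i) λ_x + λ·λ_y = 0 on Ω; (ii) for every pair of functions U, V : ℝ² → ℝ differentiable on Ω, the function f := U + V·λ satisfies f_x + λ·f_y = (U_x − α·V_y) + λ·(V_x + U_y − β·V_y) at every point of Ω. -/

import Mathlib

open Complex

noncomputable def pdx (f : ℝ × ℝ → ℂ) (p : ℝ × ℝ) : ℂ := fderiv ℝ f p (1, 0)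
noncomputable def pdy (f : ℝ × ℝ → ℂ) (p : ℝ × ℝ) : ℂ := fderiv ℝ f p (0, 1)
noncomputable def pdxR (f : ℝ × ℝ → ℝ) (p : ℝ × ℝ) : ℝ := fderiv ℝ f p (1, 0)
noncomputable def pdyR (f : ℝ × ℝ → ℝ) (p : ℝ × ℝ) : ℝ := fderiv ℝ f p (0, 1)

lemma fderiv_comb (U V : ℝ × ℝ → ℝ) (lam : ℝ × ℝ → ℂ) (p : ℝ × ℝ)
    (hU : DifferentiableAt ℝ U p) (hV : DifferentiableAt ℝ V p)
    (hL : DifferentiableAt ℝ lam p) (v : ℝ × ℝ) :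
    fderiv ℝ (fun q => (U q : ℂ) + (V q : ℂ) * lam q) p v
      = (fderiv ℝ U p v : ℂ) + (fderiv ℝ V p v : ℂ) * lam p + (V p : ℂ) * fderiv ℝ lam p v := by
  have hUc : HasFDerivAt (fun q => (U q : ℂ)) (Complex.ofRealCLM.comp (fderiv ℝ U p)) p :=
    Complex.ofRealCLM.hasFDerivAt.comp p hU.hasFDerivAt
  have hVc : HasFDerivAt (fun q => (V q : ℂ)) (Complex.ofRealCLM.comp (fderiv ℝ V p)) p :=
    Complex.ofRealCLM.hasFDerivAt.comp p hV.hasFDerivAt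
  have hf : HasFDerivAt (fun q => (U q : ℂ) + (V q : ℂ) * lam q) _ p := hUc.add (hVc.mul hL.hasFDerivAt)
  rw [hf.fderiv]
  simp [ContinuousLinearMap.add_apply, ContinuousLinearMap.smul_apply,
    ContinuousLinearMap.smulRight_apply, ContinuousLinearMap.comp_apply]
  ring

lemma quad (z : ℂ) : z ^ 2 + (-2 * z.re : ℝ) * z + (Complex.normSq z : ℂ) = 0 := by
  have h1 : (z.re : ℂ) = (z + starRingEnd ℂ z) / 2 := by
    rw [Complex.add_conj]; push_cast; ring
  have h2 : (Complex.normSq z : ℂ) = z * starRingEnd ℂ z := (Complex.mul_conj z).symm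
  rw [h2]; push_cast [h1]; ring

/-- Rigidity is equivalent to homogeneity of the transported Cauchy–Riemann system.
Here `α := |λ|²` and `β := −2 Re λ`, so that `λ² + βλ + α = 0` automatically. -/
theorem stmt2
    (Ω : Set (ℝ × ℝ)) (hΩ : IsOpen Ω)
    (lam : ℝ × ℝ → ℂ)
    (hlam : ∀ p ∈ Ω, DifferentiableAt ℝ lam p)
    (him : ∀ p ∈ Ω, 0 < (lam p).im) :
    (∀ p ∈ Ω, pdx lam p + lam p * pdy lam p = 0) ↔
    (∀ U V : ℝ × ℝ → ℝ,
      (∀ p ∈ Ω, DifferentiableAt ℝ U p) →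
      (∀ p ∈ Ω, DifferentiableAt ℝ V p) →
      ∀ p ∈ Ω,
        pdx (fun q => (U q : ℂ) + (V q : ℂ) * lam q) p
          + lam p * pdy (fun q => (U q : ℂ) + (V q : ℂ) * lam q) p
        = ((pdxR U p - Complex.normSq (lam p) * pdyR V p : ℝ) : ℂ)
          + lam p * ((pdxR V p + pdyR U p - (-2 * (lam p).re) * pdyR V p : ℝ) : ℂ)) := by
  constructor
  · intro hrig U V hU hV p hp
    have hx := fderiv_comb U V lam p (hU p hp) (hV p hp) (hlam p hp) (1, 0)
    have hy := fderiv_comb U V lam p (hU p hp) (hV p hp) (hlam p hp) (0, 1)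
    have hr := hrig p hp
    have hq := quad (lam p)
    unfold pdx pdy pdxR pdyR at *
    rw [hx, hy]
    push_cast at hq ⊢
    linear_combination (V p : ℂ) * hr + (fderiv ℝ V p (0, 1) : ℂ) * hq
  · intro h p hp
    have := h (fun _ => 0) (fun _ => 1)
      (fun q _ => differentiableAt_const 0) (fun q _ => differentiableAt_const 1) p hp
    simpa [pdx, pdy, pdxR, pdyR, fderiv_const] using this
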